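/- Let U = U_n·U_{n−1}·⋯·U_1 (n ≥ 1) be a product of letters U_k, each equal to some S_j or some S_jᵀ, which is in normal form, meaning: (i) U_k ≠ U_{k−1} for 2 ≤ k ≤ n, and (ii) whenever U_k = S_jᵀ for some j, then U_{k−1} ≠ S_i for every i ≠ j. Then the sum of all sixteen entries of the matrix U is at least 8; moreover if n ≥ 2 this entry sum is strictly greater than the entry sum of U_{n−1}·⋯·U_1. In particular U ≠ I, so no nonempty normal-form word in the generators of the super-Apollonian group equals the identity. -/

import Mathlib

open Matrix

/-- The Apollonian generators `S₁, S₂, S₃, S₄`. -/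
noncomputable def S : Fin 4 → Matrix (Fin 4) (Fin 4) ℝ := fun i =>
  Matrix.of fun j k =>
    if j = i then (if k = i then -1 else 2) else (if j = k then 1 else 0)

/-- A letter of the super-Apollonian group: `(j, false)` denotes `S j` and
`(j, true)` denotes the dual generator `S jᵀ`. -/
noncomputable def gen : Fin 4 × Bool → Matrix (Fin 4) (Fin 4) ℝ :=
  fun a => if a.2 then (S a.1)ᵀ else S a.1

/-- The normal form condition on an adjacent pair of letters `a, b`, where `a`
is immediately to the left of `b` in the word (i.e. `a = U_k`, `b = U_{k-1}`):
(i) `a ≠ b`, and (ii) if `a = S jᵀ` then `b` is not `S i` for any `i ≠ j`. -/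
def NormalRel : Fin 4 × Bool → Fin 4 × Bool → Prop := fun a b =>
  a ≠ b ∧ (a.2 = true → b.2 = false → b.1 = a.1)

/-- The sum of all sixteen entries of a `4 × 4` matrix. -/
noncomputable def entrySum (U : Matrix (Fin 4) (Fin 4) ℝ) : ℝ :=
  ∑ i, ∑ j, U i j

/-! ### Auxiliary machinery -/

/-- Row sums of a matrix. -/
noncomputable def rs (U : Matrix (Fin 4) (Fin 4) ℝ) : Fin 4 → ℝ := fun i => ∑ j, U i j

lemma fin4_cases : ∀ x : Fin 4, x = 0 ∨ x = 1 ∨ x = 2 ∨ x = 3 := by decide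

lemma entrySum_rs (M : Matrix (Fin 4) (Fin 4) ℝ) : entrySum M = ∑ k, rs M k := rfl

lemma entrySum_eq4 (U : Matrix (Fin 4) (Fin 4) ℝ) :
    entrySum U = rs U 0 + rs U 1 + rs U 2 + rs U 3 := by
  simp [entrySum, rs, Fin.sum_univ_four]

lemma rs_mulS (i : Fin 4) (U : Matrix (Fin 4) (Fin 4) ℝ) (k : Fin 4) :
    rs (S i * U) k = if k = i then 2 * entrySum U - 3 * rs U i else rs U k := by
  fin_cases i <;> fin_cases k <;>
    simp [rs, S, entrySum, Matrix.mul_apply, Fin.sum_univ_four] <;> ring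

lemma rs_mulST (i : Fin 4) (U : Matrix (Fin 4) (Fin 4) ℝ) (k : Fin 4) :
    rs ((S i)ᵀ * U) k = if k = i then -(rs U i) else rs U k + 2 * rs U i := by
  fin_cases i <;> fin_cases k <;>
    simp [rs, S, entrySum, Matrix.mul_apply, Matrix.transpose_apply,
      Fin.sum_univ_four] <;> ring

lemma es_mulS (i : Fin 4) (U : Matrix (Fin 4) (Fin 4) ℝ) :
    entrySum (S i * U) = 3 * entrySum U - 4 * rs U i := by
  have h : ∀ k, rs (S i * U) k
      = rs U k + (if k = i then 2 * entrySum U - 4 * rs U i else 0) := by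
    intro k; rw [rs_mulS]
    by_cases hk : k = i
    · subst hk; simp; ring
    · simp [hk]
  rw [entrySum_rs (S i * U), Finset.sum_congr rfl fun k _ => h k,
    Finset.sum_add_distrib, Finset.sum_ite_eq' Finset.univ i
      (fun _ => 2 * entrySum U - 4 * rs U i), ← entrySum_rs]
  simp; ring

lemma es_mulST (i : Fin 4) (U : Matrix (Fin 4) (Fin 4) ℝ) :
    entrySum ((S i)ᵀ * U) = entrySum U + 4 * rs U i := by
  have h : ∀ k, rs ((S i)ᵀ * U) k
      = rs U k + (if k = i then -2 * rs U i else 2 * rs U i) := by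
    intro k; rw [rs_mulST]
    by_cases hk : k = i
    · subst hk; simp; ring
    · simp [hk]
  rw [entrySum_rs ((S i)ᵀ * U), Finset.sum_congr rfl fun k _ => h k,
    Finset.sum_add_distrib, ← entrySum_rs]
  have h2 : (∑ k : Fin 4, if k = i then -2 * rs U i else 2 * rs U i) = 4 * rs U i := by
    rcases fin4_cases i with rfl | rfl | rfl | rfl <;>
      · rw [Fin.sum_univ_four]
        norm_num [show ((0:Fin 4) ≠ 1) from by decide, show ((0:Fin 4) ≠ 2) from by decide,
          show ((0:Fin 4) ≠ 3) from by decide, show ((1:Fin 4) ≠ 0) from by decide,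
          show ((1:Fin 4) ≠ 2) from by decide, show ((1:Fin 4) ≠ 3) from by decide,
          show ((2:Fin 4) ≠ 0) from by decide, show ((2:Fin 4) ≠ 1) from by decide,
          show ((2:Fin 4) ≠ 3) from by decide, show ((3:Fin 4) ≠ 0) from by decide,
          show ((3:Fin 4) ≠ 1) from by decide, show ((3:Fin 4) ≠ 2) from by decide]
        ring
  rw [h2]

/-- The inductive invariant attached to a word whose leftmost letter is `a`. -/
def InvP (a : Fin 4 × Bool) (U : Matrix (Fin 4) (Fin 4) ℝ) : Prop :=
  (∀ k m, k ≠ m → 0 < rs U k + rs U m) ∧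
  (∀ j, j ≠ a.1 → 2 * rs U j < entrySum U) ∧
  (a.2 = true → rs U a.1 < 0) ∧
  (a.2 = false → 0 < rs U a.1)

lemma single_lt (U : Matrix (Fin 4) (Fin 4) ℝ)
    (F1 : ∀ k m, k ≠ m → 0 < rs U k + rs U m) : ∀ j, rs U j < entrySum U := by
  have h01 := F1 0 1 (by decide); have h02 := F1 0 2 (by decide)
  have h03 := F1 0 3 (by decide); have h12 := F1 1 2 (by decide)
  have h13 := F1 1 3 (by decide); have h23 := F1 2 3 (by decide)
  intro j; rw [entrySum_eq4]
  rcases fin4_cases j with rfl | rfl | rfl | rfl <;> linarith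

lemma pair_lt (U : Matrix (Fin 4) (Fin 4) ℝ)
    (F1 : ∀ k m, k ≠ m → 0 < rs U k + rs U m) :
    ∀ j m, j ≠ m → rs U j + rs U m < entrySum U := by
  have h01 := F1 0 1 (by decide); have h02 := F1 0 2 (by decide)
  have h03 := F1 0 3 (by decide); have h12 := F1 1 2 (by decide)
  have h13 := F1 1 3 (by decide); have h23 := F1 2 3 (by decide)
  intro j m hjm; rw [entrySum_eq4]
  rcases fin4_cases j with rfl | rfl | rfl | rfl <;>
    rcases fin4_cases m with rfl | rfl | rfl | rfl <;>
      first
        | exact absurd rfl hjm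
        | linarith

lemma step_false (U : Matrix (Fin 4) (Fin 4) ℝ) (j : Fin 4)
    (F1 : ∀ k m, k ≠ m → 0 < rs U k + rs U m)
    (h2 : 2 * rs U j < entrySum U) :
    InvP (j, false) (S j * U) ∧ entrySum (S j * U) = 3 * entrySum U - 4 * rs U j := by
  have hes := es_mulS j U
  refine ⟨⟨?_, ?_, ?_, ?_⟩, hes⟩
  · intro k m hkm
    rw [rs_mulS, rs_mulS]
    rcases eq_or_ne k j with rfl | hk
    · rw [if_pos rfl, if_neg (Ne.symm hkm)]
      have := F1 k m hkm; linarith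
    · rcases eq_or_ne m j with rfl | hm
      · rw [if_neg hk, if_pos rfl]
        have := F1 k m hkm; linarith
      · rw [if_neg hk, if_neg hm]; exact F1 k m hkm
  · intro m hm
    rw [rs_mulS, if_neg hm, hes]
    have := pair_lt U F1 j m (Ne.symm hm); linarith
  · intro h; simp at h
  · intro _
    rw [rs_mulS, if_pos rfl]
    have := single_lt U F1 j; linarith

lemma step_true (U : Matrix (Fin 4) (Fin 4) ℝ) (j : Fin 4)
    (F1 : ∀ k m, k ≠ m → 0 < rs U k + rs U m)
    (hj : 0 < rs U j)
    (h2 : ∀ m, m ≠ j → 2 * rs U m < entrySum U) :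
    InvP (j, true) ((S j)ᵀ * U) ∧ entrySum ((S j)ᵀ * U) = entrySum U + 4 * rs U j := by
  have hes := es_mulST j U
  refine ⟨⟨?_, ?_, ?_, ?_⟩, hes⟩
  · intro k m hkm
    rw [rs_mulST, rs_mulST]
    rcases eq_or_ne k j with rfl | hk
    · rw [if_pos rfl, if_neg (Ne.symm hkm)]
      have := F1 k m hkm; linarith
    · rcases eq_or_ne m j with rfl | hm
      · rw [if_neg hk, if_pos rfl]
        have := F1 k m hkm; linarith
      · rw [if_neg hk, if_neg hm]
        have := F1 k m hkm; linarith
  · intro m hm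
    rw [rs_mulST, if_neg hm, hes]
    have := h2 m hm; linarith
  · intro _
    rw [rs_mulST, if_pos rfl]; linarith
  · intro h; simp at h

lemma rs_one : ∀ k, rs (1 : Matrix (Fin 4) (Fin 4) ℝ) k = 1 := by
  intro k; fin_cases k <;> simp [rs, Fin.sum_univ_four, Matrix.one_apply]

lemma es_one : entrySum (1 : Matrix (Fin 4) (Fin 4) ℝ) = 4 := by
  rw [entrySum_eq4, rs_one, rs_one, rs_one, rs_one]; norm_num

lemma key : ∀ (l : List (Fin 4 × Bool)) (a : Fin 4 × Bool),
    List.Chain' NormalRel (a :: l) →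
    InvP a (((a :: l).map gen).prod) ∧
    8 ≤ entrySum (((a :: l).map gen).prod) ∧
    entrySum ((l.map gen).prod) < entrySum (((a :: l).map gen).prod) := by
  intro l
  induction l with
  | nil =>
    intro a _
    rw [List.map_cons, List.map_nil, List.prod_cons, List.prod_nil]
    have F1 : ∀ k m, k ≠ m → 0 < rs (1 : Matrix (Fin 4) (Fin 4) ℝ) k +
        rs (1 : Matrix (Fin 4) (Fin 4) ℝ) m := by
      intro k m _; rw [rs_one, rs_one]; norm_num
    obtain ⟨i, t⟩ := a
    cases t with
    | false =>
      have h2 : 2 * rs (1 : Matrix (Fin 4) (Fin 4) ℝ) i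
          < entrySum (1 : Matrix (Fin 4) (Fin 4) ℝ) := by
        rw [rs_one, es_one]; norm_num
      obtain ⟨hInv, hes⟩ := step_false 1 i F1 h2
      have hg : gen (i, false) = S i := by simp [gen]
      rw [hg]
      refine ⟨hInv, ?_, ?_⟩ <;> rw [hes, es_one, rs_one] <;> norm_num
    | true =>
      have hj : 0 < rs (1 : Matrix (Fin 4) (Fin 4) ℝ) i := by rw [rs_one]; norm_num
      have h2 : ∀ m, m ≠ i → 2 * rs (1 : Matrix (Fin 4) (Fin 4) ℝ) m
          < entrySum (1 : Matrix (Fin 4) (Fin 4) ℝ) := by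
        intro m _; rw [rs_one, es_one]; norm_num
      obtain ⟨hInv, hes⟩ := step_true 1 i F1 hj h2
      have hg : gen (i, true) = (S i)ᵀ := by simp [gen]
      rw [hg]
      refine ⟨hInv, ?_, ?_⟩ <;> rw [hes, es_one, rs_one] <;> norm_num
  | cons b l' ih =>
    intro a h
    rw [show List.Chain' NormalRel (a :: b :: l') ↔ _ from List.isChain_cons_cons] at h
    obtain ⟨hrel, hch⟩ := h
    obtain ⟨hInvV, hsumV, _⟩ := ih b hch
    set V := ((b :: l').map gen).prod with hV
    have F1 := hInvV.1
    obtain ⟨hne, himp⟩ := hrel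
    obtain ⟨j, t⟩ := a
    rw [List.map_cons, List.prod_cons]
    cases t with
    | false =>
      have h2 : 2 * rs V j < entrySum V := by
        rcases eq_or_ne j b.1 with he | hne2
        · have hb2 : b.2 = true := by
            rcases b with ⟨i, s⟩
            cases s with
            | false => exact absurd (by simp_all) hne
            | true => rfl
          have h3 := hInvV.2.2.1 hb2
          have h4 := single_lt V F1 j
          rw [← he] at h3; linarith
        · exact hInvV.2.1 j hne2
      obtain ⟨hInv', hes⟩ := step_false V j F1 h2
      have hg : gen (j, false) = S j := by simp [gen]
      rw [hg]
      exact ⟨hInv', by linarith, by linarith⟩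
    | true =>
      have hj : 0 < rs V j := by
        cases hbs : b.2 with
        | false =>
          have h5 := himp rfl hbs
          have h4 := hInvV.2.2.2 hbs
          rw [h5] at h4; exact h4
        | true =>
          have hbj : b.1 ≠ j := by
            intro hh; apply hne
            rcases b with ⟨i, s⟩; simp_all
          have h3 := hInvV.2.2.1 hbs
          have := F1 b.1 j hbj; linarith
      have h2 : ∀ m, m ≠ j → 2 * rs V m < entrySum V := by
        intro m hm
        rcases eq_or_ne m b.1 with he | hm2
        · have hb2 : b.2 = true := by
            cases hbs : b.2 with
            | false => exact absurd (by rw [himp rfl hbs] at he; exact he) hm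
            | true => rfl
          have h3 := hInvV.2.2.1 hb2
          have h4 := single_lt V F1 m
          rw [← he] at h3; linarith
        · exact hInvV.2.1 m hm2
      obtain ⟨hInv', hes⟩ := step_true V j F1 hj h2
      have hg : gen (j, true) = (S j)ᵀ := by simp [gen]
      rw [hg]
      exact ⟨hInv', by linarith, by linarith⟩

/-- A nonempty normal-form word `U = U_n ⋯ U_1` in the generators of the
super-Apollonian group (written as a list with leftmost letter first) has
entry sum at least `8`; if `n ≥ 2` the entry sum strictly exceeds that of
`U_{n-1} ⋯ U_1`; in particular `U ≠ I`. -/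
theorem normal_form_word_ne_one
    (l : List (Fin 4 × Bool)) (hne : l ≠ []) (hnf : l.Chain' NormalRel) :
    8 ≤ entrySum ((l.map gen).prod) ∧
    (2 ≤ l.length →
      entrySum ((l.tail.map gen).prod) < entrySum ((l.map gen).prod)) ∧
    (l.map gen).prod ≠ 1 := by
  rcases l with _ | ⟨a, l'⟩
  · exact absurd rfl hne
  obtain ⟨_, h8, hlt⟩ := key l' a hnf
  refine ⟨h8, fun _ => hlt, fun h => ?_⟩
  rw [h, es_one] at h8; norm_num at h8
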